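/- Let Q ⊆ ℝ^m be a nonempty closed convex set having the uniform second-order tangent path (uSOTP) property at λ̄ ∈ Q. Then for every w ∈ ℝ^m with w ∉ aff(N_Q(λ̄)), the strict second subderivative satisfies d²_s σ_Q(0|λ̄)(w) = +∞. -/

import Mathlib

open Filter Topology Set
open scoped InnerProductSpace Pointwise

noncomputable section

/-- Support function of `Q ⊆ ℝ^m`, with values in the extended reals. -/
def supportFn {m : ℕ} (Q : Set (EuclideanSpace ℝ (Fin m))) (x : EuclideanSpace ℝ (Fin m)) :
    EReal :=
  ⨆ z ∈ Q, ((⟪z, x⟫_ℝ : ℝ) : EReal)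

/-- The normal cone of a convex set `Q ⊆ ℝ^m` at a point `lam ∈ Q`. -/
def normalCone {m : ℕ} (Q : Set (EuclideanSpace ℝ (Fin m))) (lam : EuclideanSpace ℝ (Fin m)) :
    Set (EuclideanSpace ℝ (Fin m)) :=
  {v | ∀ y ∈ Q, ⟪v, y - lam⟫_ℝ ≤ 0}

/-- The tangent cone of a convex set `Q` at `lam`: the closure of `⋃_{t>0} t • (Q - lam)`. -/
def tangentConeSet {m : ℕ} (Q : Set (EuclideanSpace ℝ (Fin m))) (lam : EuclideanSpace ℝ (Fin m)) :
    Set (EuclideanSpace ℝ (Fin m)) :=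
  closure (⋃ t ∈ Set.Ioi (0 : ℝ), t • ((fun z => z - lam) '' Q))

/-- The lineality space `lin(T_Q(lam)) = T_Q(lam) ∩ (−T_Q(lam))` of the tangent cone. -/
def linTangent {m : ℕ} (Q : Set (EuclideanSpace ℝ (Fin m))) (lam : EuclideanSpace ℝ (Fin m)) :
    Set (EuclideanSpace ℝ (Fin m)) :=
  tangentConeSet Q lam ∩ (-(tangentConeSet Q lam))

/-- The uniform second-order tangent path (uSOTP) property of `Q` at `lam0`. -/
def uSOTP {m : ℕ} (Q : Set (EuclideanSpace ℝ (Fin m))) (lam0 : EuclideanSpace ℝ (Fin m)) : Prop :=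
  ∃ δ > (0 : ℝ), ∃ M > (0 : ℝ), ∃ V ∈ 𝓝 lam0,
    ∃ S : EuclideanSpace ℝ (Fin m) → Submodule ℝ (EuclideanSpace ℝ (Fin m)),
      (∀ lam ∈ Q ∩ V, (S lam : Set (EuclideanSpace ℝ (Fin m))) ⊆ linTangent Q lam) ∧
      (∀ lamSeq : ℕ → EuclideanSpace ℝ (Fin m), (∀ k, lamSeq k ∈ Q) →
        Tendsto lamSeq atTop (𝓝 lam0) →
        (∀ v ∈ linTangent Q lam0, ∃ vs : ℕ → EuclideanSpace ℝ (Fin m),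
          (∀ k, vs k ∈ S (lamSeq k)) ∧ Tendsto vs atTop (𝓝 v)) ∧
        (∀ vs : ℕ → EuclideanSpace ℝ (Fin m), (∀ k, vs k ∈ S (lamSeq k)) →
          ∀ p, MapClusterPt p atTop vs → p ∈ linTangent Q lam0)) ∧
      (∀ lam ∈ Q ∩ V, ∀ v ∈ S lam, ‖v‖ = 1 →
        ∃ r : ℝ → EuclideanSpace ℝ (Fin m),
          ∀ t ∈ Set.Icc (0 : ℝ) δ, ‖r t‖ ≤ M ∧ lam + t • v + (t ^ 2 / 2) • r t ∈ Q)

/-- Second-order difference quotient `Δ²_t f(x|v)(h)`. -/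
def secondDQ {n : ℕ} (f : EuclideanSpace ℝ (Fin n) → EReal)
    (x v : EuclideanSpace ℝ (Fin n)) (t : ℝ) (h : EuclideanSpace ℝ (Fin n)) : EReal :=
  ((2 / t ^ 2 : ℝ) : EReal) * (f (x + t • h) - f x - ((t * ⟪v, h⟫_ℝ : ℝ) : EReal))

/-- Strict second subderivative of the support function `σ_Q` at `0` for `lam0` in direction `w`. -/
def strictD2supp {m : ℕ} (Q : Set (EuclideanSpace ℝ (Fin m))) (lam0 : EuclideanSpace ℝ (Fin m))
    (w : EuclideanSpace ℝ (Fin m)) : EReal :=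
  liminf
    (fun p : ℝ × EuclideanSpace ℝ (Fin m) × EuclideanSpace ℝ (Fin m) × EuclideanSpace ℝ (Fin m) =>
      secondDQ (supportFn Q) p.2.2.1 p.2.2.2 p.1 p.2.1)
    (((𝓝[>] (0 : ℝ)) ×ˢ (𝓝 w ×ˢ (𝓝 (0 : EuclideanSpace ℝ (Fin m)) ×ˢ 𝓝 lam0))) ⊓
      Filter.principal
        {p : ℝ × EuclideanSpace ℝ (Fin m) × EuclideanSpace ℝ (Fin m) × EuclideanSpace ℝ (Fin m) |
          p.2.2.2 ∈ Q ∧ supportFn Q p.2.2.1 = ((⟪p.2.2.2, p.2.2.1⟫_ℝ : ℝ) : EReal)})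

/-- Strict second subderivative of `φ = σ_Q ∘ F` at `xbar` for `vbar` in direction `h`. -/
def strictD2phi {n m : ℕ} (Q : Set (EuclideanSpace ℝ (Fin m)))
    (F : EuclideanSpace ℝ (Fin n) → EuclideanSpace ℝ (Fin m))
    (F' : EuclideanSpace ℝ (Fin n) → (EuclideanSpace ℝ (Fin n) →L[ℝ] EuclideanSpace ℝ (Fin m)))
    (xbar vbar h : EuclideanSpace ℝ (Fin n)) : EReal :=
  liminf
    (fun p : ℝ × EuclideanSpace ℝ (Fin n) × EuclideanSpace ℝ (Fin n) × EuclideanSpace ℝ (Fin n) =>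
      secondDQ (fun x => supportFn Q (F x)) p.2.2.1 p.2.2.2 p.1 p.2.1)
    (((𝓝[>] (0 : ℝ)) ×ˢ (𝓝 h ×ˢ (𝓝 xbar ×ˢ 𝓝 vbar))) ⊓
      Filter.principal
        {p : ℝ × EuclideanSpace ℝ (Fin n) × EuclideanSpace ℝ (Fin n) × EuclideanSpace ℝ (Fin n) |
          ∃ lam ∈ Q, p.2.2.2 = ContinuousLinearMap.adjoint (F' p.2.2.1) lam ∧
            supportFn Q (F p.2.2.1) = ((⟪lam, F p.2.2.1⟫_ℝ : ℝ) : EReal)})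

namespace StrictAux

variable {m : ℕ} {Q : Set (EuclideanSpace ℝ (Fin m))} {lam x z v : EuclideanSpace ℝ (Fin m)}

lemma le_supportFn (hz : z ∈ Q) (x : EuclideanSpace ℝ (Fin m)) :
    ((⟪z, x⟫_ℝ : ℝ) : EReal) ≤ supportFn Q x :=
  le_iSup₂ (f := fun z (_ : z ∈ Q) => ((⟪z, x⟫_ℝ : ℝ) : EReal)) z hz

lemma inner_le_of_supportEq (hsupp : supportFn Q x = ((⟪lam, x⟫_ℝ : ℝ) : EReal))
    (hz : z ∈ Q) : ⟪z, x⟫_ℝ ≤ ⟪lam, x⟫_ℝ := by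
  have h := le_supportFn hz x
  rw [hsupp] at h
  exact_mod_cast h

lemma inner_nonpos_of_tangent (hv : v ∈ tangentConeSet Q lam)
    (hx : ∀ z ∈ Q, ⟪z, x⟫_ℝ ≤ ⟪lam, x⟫_ℝ) : ⟪v, x⟫_ℝ ≤ 0 := by
  have hclosed : IsClosed {y : EuclideanSpace ℝ (Fin m) | ⟪y, x⟫_ℝ ≤ 0} :=
    isClosed_le (Continuous.inner continuous_id continuous_const) continuous_const
  have hsub : (⋃ t ∈ Set.Ioi (0 : ℝ), t • ((fun z => z - lam) '' Q)) ⊆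
      {y : EuclideanSpace ℝ (Fin m) | ⟪y, x⟫_ℝ ≤ 0} := by
    rintro y hy
    simp only [Set.mem_iUnion] at hy
    obtain ⟨t, ht, hy⟩ := hy
    obtain ⟨u, ⟨z, hz, rfl⟩, rfl⟩ := hy
    have : ⟪z - lam, x⟫_ℝ ≤ 0 := by
      rw [inner_sub_left]; linarith [hx z hz]
    show ⟪t • (z - lam), x⟫_ℝ ≤ 0
    rw [real_inner_smul_left]
    exact mul_nonpos_of_nonneg_of_nonpos (le_of_lt (Set.mem_Ioi.mp ht)) this
  exact closure_minimal hsub hclosed hv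

lemma inner_eq_zero_of_linTangent (hv : v ∈ linTangent Q lam)
    (hx : ∀ z ∈ Q, ⟪z, x⟫_ℝ ≤ ⟪lam, x⟫_ℝ) : ⟪v, x⟫_ℝ = 0 := by
  have h1 := inner_nonpos_of_tangent hv.1 hx
  have h2 := inner_nonpos_of_tangent (Set.mem_neg.mp hv.2) hx
  rw [inner_neg_left] at h2
  linarith

lemma zero_mem_tangent (hlam : lam ∈ Q) : (0 : EuclideanSpace ℝ (Fin m)) ∈ tangentConeSet Q lam := by
  apply subset_closure
  simp only [Set.mem_iUnion]
  exact ⟨1, Set.mem_Ioi.mpr one_pos, ⟨lam - lam, ⟨lam, hlam, rfl⟩, by simp⟩⟩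


lemma convex_preTangent (hQconv : Convex ℝ Q) (lam : EuclideanSpace ℝ (Fin m)) :
    Convex ℝ (⋃ t ∈ Set.Ioi (0 : ℝ), t • ((fun z => z - lam) '' Q)) := by
  have hs : Convex ℝ ((fun z => z - lam) '' Q) := by
    have : (fun z : EuclideanSpace ℝ (Fin m) => z - lam) '' Q =
        (fun z : EuclideanSpace ℝ (Fin m) => -lam + z) '' Q := by
      apply Set.image_congr
      intro z _; abel
    rw [this]
    exact hQconv.translate (-lam)
  have : (⋃ t ∈ Set.Ioi (0 : ℝ), t • ((fun z => z - lam) '' Q)) =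
      (hs.toCone _ : Set (EuclideanSpace ℝ (Fin m))) := by
    ext y
    simp only [Set.mem_iUnion, Set.mem_Ioi, Convex.toCone, ConvexCone.mem_mk,
      SetLike.mem_coe]
  rw [this]
  exact (hs.toCone _).convex

lemma mem_tangent_of_orth_normal (hQconv : Convex ℝ Q) (hlam : lam ∈ Q)
    (hv : ∀ u ∈ normalCone Q lam, ⟪u, v⟫_ℝ = 0) : v ∈ tangentConeSet Q lam := by
  by_contra hvT
  have hconvT : Convex ℝ (tangentConeSet Q lam) :=
    (convex_preTangent hQconv lam).closure
  obtain ⟨f, u, hfs, hfv⟩ :=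
    geometric_hahn_banach_closed_point hconvT isClosed_closure hvT
  have hu0 : 0 < u := by
    have := hfs 0 (zero_mem_tangent hlam)
    simpa using this
  -- f is nonpositive on the tangent cone
  have hfle : ∀ y, y ∈ (⋃ t ∈ Set.Ioi (0 : ℝ), t • ((fun z => z - lam) '' Q)) → f y ≤ 0 := by
    intro y hy
    by_contra h
    push_neg at h
    have hc : (0:ℝ) < (u + 1) / f y := div_pos (by linarith) h
    have hmem : ((u + 1) / f y) • y ∈ tangentConeSet Q lam := by
      apply subset_closure
      simp only [Set.mem_iUnion, Set.mem_Ioi] at hy ⊢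
      obtain ⟨t, ht, hy⟩ := hy
      refine ⟨((u + 1) / f y) * t, mul_pos hc ht, ?_⟩
      rw [← smul_smul]
      exact Set.smul_mem_smul_set hy
    have := hfs _ hmem
    rw [map_smul, smul_eq_mul, div_mul_cancel₀ _ (ne_of_gt h)] at this
    linarith
  set u₀ := (InnerProductSpace.toDual ℝ (EuclideanSpace ℝ (Fin m))).symm f with hu₀
  have hrep : ∀ y, ⟪u₀, y⟫_ℝ = f y := fun y => InnerProductSpace.toDual_symm_apply
  have hu₀N : u₀ ∈ normalCone Q lam := by
    intro y hy
    rw [hrep]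
    apply hfle
    simp only [Set.mem_iUnion, Set.mem_Ioi]
    refine ⟨1, one_pos, ?_⟩
    rw [one_smul]
    exact Set.mem_image_of_mem _ hy
  have h0 := hv u₀ hu₀N
  rw [hrep] at h0
  linarith


lemma mem_affineSpan_of_mem_span {s : Set (EuclideanSpace ℝ (Fin m))}
    (h0 : (0 : EuclideanSpace ℝ (Fin m)) ∈ s) {z : EuclideanSpace ℝ (Fin m)}
    (hz : z ∈ Submodule.span ℝ s) :
    z ∈ (affineSpan ℝ s : Set (EuclideanSpace ℝ (Fin m))) := by
  have h0' : (0 : EuclideanSpace ℝ (Fin m)) ∈ affineSpan ℝ s := subset_affineSpan ℝ s h0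
  induction hz using Submodule.span_induction with
  | mem y hy => exact subset_affineSpan ℝ s hy
  | zero => exact h0'
  | add a b _ _ ha hb =>
    have := AffineSubspace.smul_vsub_vadd_mem (affineSpan ℝ s) (1:ℝ) ha h0' hb
    simpa using this
  | smul c a _ ha =>
    have := AffineSubspace.smul_vsub_vadd_mem (affineSpan ℝ s) c ha h0' h0'
    simpa using this

lemma EReal.eq_top_of_forall_coe_le {x : EReal} (h : ∀ C : ℝ, (C : EReal) ≤ x) : x = ⊤ := by
  induction x using EReal.rec with
  | bot => simpa using h 0
  | coe r =>
    have := h (r + 1)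
    rw [EReal.coe_le_coe_iff] at this
    linarith
  | top => rfl


lemma eventually_good_v {lam0 : EuclideanSpace ℝ (Fin m)}
    (S : EuclideanSpace ℝ (Fin m) → Submodule ℝ (EuclideanSpace ℝ (Fin m)))
    (hconv : ∀ lamSeq : ℕ → EuclideanSpace ℝ (Fin m), (∀ k, lamSeq k ∈ Q) →
        Tendsto lamSeq atTop (𝓝 lam0) →
        (∀ v ∈ linTangent Q lam0, ∃ vs : ℕ → EuclideanSpace ℝ (Fin m),
          (∀ k, vs k ∈ S (lamSeq k)) ∧ Tendsto vs atTop (𝓝 v)))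
    {v0 : EuclideanSpace ℝ (Fin m)} (hv0 : v0 ∈ linTangent Q lam0) (hv0n : ‖v0‖ = 1)
    {η : ℝ} (hη : 0 < η) :
    ∀ᶠ lam in 𝓝 lam0 ⊓ Filter.principal Q,
      ∃ v ∈ S lam, ‖v‖ = 1 ∧ ‖v - v0‖ ≤ η := by
  by_contra hcon
  rw [Filter.not_eventually] at hcon
  obtain ⟨ns, hns, hnp⟩ := Filter.exists_seq_forall_of_frequently hcon
  rw [tendsto_inf] at hns
  obtain ⟨hns1, hns2⟩ := hns
  rw [tendsto_principal] at hns2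
  obtain ⟨N, hN⟩ := eventually_atTop.mp hns2
  set seq' : ℕ → EuclideanSpace ℝ (Fin m) := fun k => ns (k + N) with hseq'
  have hseqQ : ∀ k, seq' k ∈ Q := fun k => hN (k + N) (Nat.le_add_left N k)
  have hseqT : Tendsto seq' atTop (𝓝 lam0) :=
    hns1.comp (tendsto_add_atTop_nat N)
  obtain ⟨vs, hvsS, hvs⟩ := hconv seq' hseqQ hseqT v0 hv0
  have hnorm : Tendsto (fun k => ‖vs k‖) atTop (𝓝 1) := by
    have := hvs.norm
    rwa [hv0n] at this
  have hpos : ∀ᶠ k in atTop, 0 < ‖vs k‖ :=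
    hnorm.eventually (eventually_gt_nhds one_pos)
  have hu : Tendsto (fun k => (‖vs k‖)⁻¹ • vs k) atTop (𝓝 v0) := by
    have := Tendsto.smul (hnorm.inv₀ one_ne_zero) hvs
    simpa using this
  have hclose : ∀ᶠ k in atTop, ‖(‖vs k‖)⁻¹ • vs k - v0‖ ≤ η := by
    have := hu.eventually (Metric.closedBall_mem_nhds v0 hη)
    filter_upwards [this] with k hk
    rw [← dist_eq_norm]
    exact hk
  obtain ⟨k, hk1, hk2⟩ := (hpos.and hclose).exists
  apply hnp (k + N)
  refine ⟨(‖vs k‖)⁻¹ • vs k, Submodule.smul_mem _ _ (hvsS k), ?_, hk2⟩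
  rw [norm_smul, norm_inv, norm_norm, inv_mul_cancel₀ (ne_of_gt hk1)]

end StrictAux

open StrictAux in
set_option maxHeartbeats 1000000 in
theorem stmt18 {m : ℕ} (Q : Set (EuclideanSpace ℝ (Fin m)))
    (hQne : Q.Nonempty) (hQc : IsClosed Q) (hQconv : Convex ℝ Q)
    (lambar : EuclideanSpace ℝ (Fin m)) (hlambar : lambar ∈ Q)
    (husotp : uSOTP Q lambar) :
    ∀ w : EuclideanSpace ℝ (Fin m),
      w ∉ (affineSpan ℝ (normalCone Q lambar) : Set (EuclideanSpace ℝ (Fin m))) →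
        strictD2supp Q lambar w = ⊤ := by
  intro w hw
  classical
  set N : Set (EuclideanSpace ℝ (Fin m)) := normalCone Q lambar with hNdef
  set K : Submodule ℝ (EuclideanSpace ℝ (Fin m)) := Submodule.span ℝ N with hKdef
  have h0N : (0 : EuclideanSpace ℝ (Fin m)) ∈ N := by
    intro y _
    simp
  have hwK : w ∉ K := fun h => hw (mem_affineSpan_of_mem_span h0N h)
  set vb : EuclideanSpace ℝ (Fin m) := w - (Submodule.orthogonalProjection K w : EuclideanSpace ℝ (Fin m)) with hvbdef
  have hvbK : vb ∈ Kᗮ := Submodule.sub_starProjection_mem_orthogonal w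
  have hvb0 : vb ≠ 0 := by
    intro h
    apply hwK
    have : w = (Submodule.orthogonalProjection K w : EuclideanSpace ℝ (Fin m)) := by
      have := sub_eq_zero.mp h
      exact this
    rw [this]
    exact (Submodule.orthogonalProjection K w).2
  have hnvb : 0 < ‖vb‖ := norm_pos_iff.mpr hvb0
  have hproj0 : ⟪vb, (Submodule.orthogonalProjection K w : EuclideanSpace ℝ (Fin m))⟫_ℝ = 0 := by
    rw [real_inner_comm]
    exact (Submodule.mem_orthogonal K vb).mp hvbK _ (Submodule.orthogonalProjection K w).2
  have hcw : ⟪vb, w⟫_ℝ = ‖vb‖ ^ 2 := by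
    have hw' : w = vb + (Submodule.orthogonalProjection K w : EuclideanSpace ℝ (Fin m)) := by
      rw [hvbdef]; abel
    nth_rewrite 1 [hw']
    rw [inner_add_right, hproj0, real_inner_self_eq_norm_sq]
    ring
  set v0 : EuclideanSpace ℝ (Fin m) := ‖vb‖⁻¹ • vb with hv0def
  have hv0n : ‖v0‖ = 1 := by
    rw [hv0def, norm_smul, norm_inv, norm_norm, inv_mul_cancel₀ hnvb.ne']
  set c : ℝ := ⟪v0, w⟫_ℝ with hcdef
  have hc : c = ‖vb‖ := by
    rw [hcdef, hv0def, real_inner_smul_left, hcw]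
    field_simp
  have hcpos : 0 < c := hc ▸ hnvb
  have hv0K : v0 ∈ Kᗮ := Submodule.smul_mem _ _ hvbK
  have hv0orth : ∀ u ∈ N, ⟪u, v0⟫_ℝ = 0 := fun u hu =>
    (Submodule.mem_orthogonal K v0).mp hv0K u (Submodule.subset_span hu)
  have hv0lin : v0 ∈ linTangent Q lambar := by
    constructor
    · exact mem_tangent_of_orth_normal hQconv hlambar hv0orth
    · rw [Set.mem_neg]
      apply mem_tangent_of_orth_normal hQconv hlambar
      intro u hu
      rw [inner_neg_right, hv0orth u hu, neg_zero]
  obtain ⟨δ, hδ, M, hM, V, hV, S, hSsub, hSconv, hSpath⟩ := husotp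
  apply StrictAux.EReal.eq_top_of_forall_coe_le
  intro C
  rw [strictD2supp, Filter.liminf_eq]
  apply le_sSup
  simp only [Set.mem_setOf_eq]
  rw [eventually_inf_principal]
  -- constants
  set α : ℝ := max 1 ((C + 1) / c) with hαdef
  have hα1 : (1 : ℝ) ≤ α := le_max_left _ _
  have hαpos : 0 < α := lt_of_lt_of_le one_pos hα1
  have hαc : C + 1 ≤ α * c := by
    have := le_max_right 1 ((C + 1) / c)
    rw [div_le_iff₀ hcpos] at this
    linarith
  set η : ℝ := c / (4 * (‖w‖ + 1)) with hηdef
  have hηpos : 0 < η := by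
    apply div_pos hcpos
    positivity
  set εw : ℝ := min 1 (c / 4) with hεwdef
  have hεwpos : 0 < εw := lt_min one_pos (by linarith)
  set B : ℝ := α ^ 2 * M with hBdef
  have hBpos : 0 < B := by positivity
  set εx : ℝ := 1 / (2 * B) with hεxdef
  have hεxpos : 0 < εx := by positivity
  set t₀ : ℝ := min (δ / α) (1 / (2 * B * (‖w‖ + 1))) with ht₀def
  have ht₀pos : 0 < t₀ := by
    apply lt_min (div_pos hδ hαpos)
    positivity
  -- eventual facts
  have ht : ∀ᶠ t in 𝓝[>] (0 : ℝ), 0 < t ∧ t ≤ t₀ := by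
    filter_upwards [eventually_mem_nhdsWithin,
      eventually_nhdsWithin_of_eventually_nhds (eventually_lt_nhds ht₀pos)] with t h1 h2
    exact ⟨h1, h2.le⟩
  have hwt : ∀ᶠ y in 𝓝 w, ‖y - w‖ ≤ εw := by
    filter_upwards [Metric.closedBall_mem_nhds w hεwpos] with y hy
    rw [← dist_eq_norm]
    exact hy
  have hxe : ∀ᶠ x in 𝓝 (0 : EuclideanSpace ℝ (Fin m)), ‖x‖ ≤ εx := by
    filter_upwards [Metric.closedBall_mem_nhds (0 : EuclideanSpace ℝ (Fin m)) hεxpos] with x hx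
    rw [← dist_zero_right]
    exact hx
  have hlamV : ∀ᶠ l in 𝓝 lambar, l ∈ V := eventually_iff_exists_mem.mpr ⟨V, hV, fun _ h => h⟩
  have hgood : ∀ᶠ l in 𝓝 lambar, l ∈ Q →
      ∃ v ∈ S l, ‖v‖ = 1 ∧ ‖v - v0‖ ≤ η := by
    rw [← eventually_inf_principal]
    exact eventually_good_v S (fun seq hQ hT => (hSconv seq hQ hT).1) hv0lin hv0n hηpos
  have hlam : ∀ᶠ l in 𝓝 lambar, l ∈ V ∧ (l ∈ Q → ∃ v ∈ S l, ‖v‖ = 1 ∧ ‖v - v0‖ ≤ η) :=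
    hlamV.and hgood
  filter_upwards [ht.prod_mk (hwt.prod_mk (hxe.prod_mk hlam))] with p hp hcon
  obtain ⟨⟨htpos, htle⟩, hwd, hxb, hlV, hgl⟩ := hp
  obtain ⟨hlamQ, hsupp⟩ := hcon
  set t : ℝ := p.1 with htdef
  set wt : EuclideanSpace ℝ (Fin m) := p.2.1 with hwtdef
  set x : EuclideanSpace ℝ (Fin m) := p.2.2.1 with hxdef
  set lam : EuclideanSpace ℝ (Fin m) := p.2.2.2 with hlamdef
  obtain ⟨v, hvS, hvn, hvclose⟩ := hgl hlamQ
  have hvlin : v ∈ linTangent Q lam := hSsub lam ⟨hlamQ, hlV⟩ hvS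
  have hxsupp : ∀ z ∈ Q, ⟪z, x⟫_ℝ ≤ ⟪lam, x⟫_ℝ := fun z hz => inner_le_of_supportEq hsupp hz
  have hvx : ⟪v, x⟫_ℝ = 0 := inner_eq_zero_of_linTangent hvlin hxsupp
  obtain ⟨r, hr⟩ := hSpath lam ⟨hlamQ, hlV⟩ v hvS hvn
  have hsmem : α * t ∈ Set.Icc (0 : ℝ) δ := by
    constructor
    · positivity
    · have h1 : t ≤ δ / α := le_trans htle (min_le_left _ _)
      rw [le_div_iff₀ hαpos] at h1
      linarith [h1]
  obtain ⟨hrM, hzQ⟩ := hr (α * t) hsmem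
  set z : EuclideanSpace ℝ (Fin m) := lam + (α * t) • v + ((α * t) ^ 2 / 2) • r (α * t) with hzdef
  -- norm bounds
  have hwtn : ‖wt‖ ≤ ‖w‖ + 1 := by
    have := norm_sub_norm_le wt w
    have hεw1 : εw ≤ 1 := min_le_left _ _
    linarith [hwd]
  have hvw : c / 2 ≤ ⟪v, wt⟫_ℝ := by
    have hsplit : ⟪v, wt⟫_ℝ = ⟪v0, w⟫_ℝ + ⟪v - v0, wt⟫_ℝ + ⟪v0, wt - w⟫_ℝ := by
      rw [inner_sub_left, inner_sub_right]
      ring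
    have h1 : |⟪v - v0, wt⟫_ℝ| ≤ η * (‖w‖ + 1) := by
      calc |⟪v - v0, wt⟫_ℝ| ≤ ‖v - v0‖ * ‖wt‖ := abs_real_inner_le_norm _ _
        _ ≤ η * (‖w‖ + 1) := by
            apply mul_le_mul hvclose hwtn (norm_nonneg _) hηpos.le
    have hη4 : η * (‖w‖ + 1) = c / 4 := by
      rw [hηdef]
      field_simp
    have h2 : |⟪v0, wt - w⟫_ℝ| ≤ c / 4 := by
      calc |⟪v0, wt - w⟫_ℝ| ≤ ‖v0‖ * ‖wt - w‖ := abs_real_inner_le_norm _ _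
        _ ≤ 1 * εw := by
            apply mul_le_mul (le_of_eq hv0n) hwd (norm_nonneg _) zero_le_one
        _ ≤ c / 4 := by rw [one_mul]; exact min_le_right _ _
    rw [hsplit]
    have ha1 := abs_le.mp h1
    have ha2 := abs_le.mp h2
    rw [hη4] at ha1
    rw [← hcdef]
    linarith [ha1.1, ha2.1]
  have hxtw : ‖x + t • wt‖ ≤ εx + t₀ * (‖w‖ + 1) := by
    calc ‖x + t • wt‖ ≤ ‖x‖ + ‖t • wt‖ := norm_add_le _ _
      _ = ‖x‖ + t * ‖wt‖ := by rw [norm_smul, Real.norm_eq_abs, abs_of_pos htpos]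
      _ ≤ εx + t₀ * (‖w‖ + 1) := by
          apply add_le_add hxb
          apply mul_le_mul htle hwtn (norm_nonneg _) ht₀pos.le
  have hBb : B * ‖x + t • wt‖ ≤ 1 := by
    have h1 : B * εx = 1 / 2 := by
      rw [hεxdef]
      field_simp
    have h2 : t₀ ≤ 1 / (2 * B * (‖w‖ + 1)) := min_le_right _ _
    have h3 : B * (t₀ * (‖w‖ + 1)) ≤ 1 / 2 := by
      calc B * (t₀ * (‖w‖ + 1)) ≤ B * (1 / (2 * B * (‖w‖ + 1)) * (‖w‖ + 1)) := by
            apply mul_le_mul_of_nonneg_left _ hBpos.le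
            apply mul_le_mul_of_nonneg_right h2 (by positivity)
        _ = 1 / 2 := by field_simp
    have h4 : B * ‖x + t • wt‖ ≤ B * εx + B * (t₀ * (‖w‖ + 1)) := by
      have := mul_le_mul_of_nonneg_left hxtw hBpos.le
      rw [mul_add] at this
      exact this
    linarith [h4, h1, h3]
  -- support function bound
  have hexp : ⟪z, x + t • wt⟫_ℝ = ⟪lam, x⟫_ℝ + t * ⟪lam, wt⟫_ℝ
      + (α * t) * (t * ⟪v, wt⟫_ℝ) + ((α * t) ^ 2 / 2) * ⟪r (α * t), x + t • wt⟫_ℝ := by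
    rw [hzdef]
    simp only [inner_add_left, inner_add_right, real_inner_smul_left, real_inner_smul_right, hvx]
    ring
  have hzb := le_supportFn hzQ (x + t • wt)
  rw [hexp] at hzb
  show (C : EReal) ≤ secondDQ (supportFn Q) x lam t wt
  rw [secondDQ, hsupp]
  by_cases hT : supportFn Q (x + t • wt) = ⊤
  · rw [hT, EReal.top_sub_coe, EReal.top_sub_coe, EReal.coe_mul_top_of_pos (by positivity)]
    exact le_top
  · have hnb : supportFn Q (x + t • wt) ≠ ⊥ := by
      intro h
      have h2 := le_supportFn hzQ (x + t • wt)
      rw [h, le_bot_iff] at h2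
      exact EReal.coe_ne_bot _ h2
    lift supportFn Q (x + t • wt) to ℝ using ⟨hT, hnb⟩ with d hd
    rw [← EReal.coe_sub, ← EReal.coe_sub, ← EReal.coe_mul, EReal.coe_le_coe_iff]
    rw [EReal.coe_le_coe_iff] at hzb
    have habs : |⟪r (α * t), x + t • wt⟫_ℝ| ≤ M * ‖x + t • wt‖ :=
      (abs_real_inner_le_norm _ _).trans
        (mul_le_mul_of_nonneg_right hrM (norm_nonneg _))
    have ha' : -(M * ‖x + t • wt‖) ≤ ⟪r (α * t), x + t • wt⟫_ℝ := (abs_le.mp habs).1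
    have ht2 : (0 : ℝ) < t ^ 2 := by positivity
    have e1 : α * t ^ 2 * (c / 2) ≤ α * t ^ 2 * ⟪v, wt⟫_ℝ :=
      mul_le_mul_of_nonneg_left hvw (by positivity)
    have e2 : -(t ^ 2 / 2) ≤ ((α * t) ^ 2 / 2) * ⟪r (α * t), x + t • wt⟫_ℝ := by
      have h5 : ((α * t) ^ 2 / 2) * (-(M * ‖x + t • wt‖))
          ≤ ((α * t) ^ 2 / 2) * ⟪r (α * t), x + t • wt⟫_ℝ :=
        mul_le_mul_of_nonneg_left ha' (by positivity)
      have hBb' : α ^ 2 * M * ‖x + t • wt‖ ≤ 1 := hBb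
      have h6 : (0:ℝ) ≤ t ^ 2 * (1 - α ^ 2 * M * ‖x + t • wt‖) :=
        mul_nonneg (sq_nonneg t) (by linarith)
      nlinarith [h5, h6]
    have hfin : C * t ^ 2 ≤ 2 * (d - ⟪lam, x⟫_ℝ - t * ⟪lam, wt⟫_ℝ) := by
      have e3 : (0:ℝ) ≤ (α * c - (C + 1)) * t ^ 2 :=
        mul_nonneg (by linarith) (sq_nonneg t)
      nlinarith [hzb, e1, e2, e3]
    rw [div_mul_eq_mul_div, le_div_iff₀ ht2]
    linarith [hfin]

end
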